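/- Let A: \partial\Delta \to GL(N,\mathbb{C}) be continuous and suppose (\Phi^+, \Phi^-) and (\Psi^+, \Psi^-) are two canonical systems for A, with partial indices (k_1 \ge ... \ge k_N) and (l_1 \ge ... \ge l_N) respectively (each arranged in decreasing order). Then k_i = l_i for all i; i.e., the partial indices of A are independent of the canonical system chosen, up to reordering. In particular the total index k = \sum k_i is an invariant of A. -/

import Mathlib

open Metric

/-- Order at infinity: `h(z) = z^{-k} g(1/z)` with `g` holomorphic near `0`, `g(0) ≠ 0`. -/
def HasOrderAtInfty {E : Type*} [NormedAddCommGroup E] [NormedSpace ℂ E]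
    (h : ℂ → E) (k : ℤ) : Prop :=
  ∃ r > (0 : ℝ), ∃ g : ℂ → E, DifferentiableOn ℂ g (ball 0 r) ∧ g 0 ≠ 0 ∧
    ∀ z : ℂ, r⁻¹ < ‖z‖ → h z = (z ^ (-k) : ℂ) • g z⁻¹

/-- `(Φ⁺, Φ⁻)` is a canonical system for `A` with partial indices `k`. -/
def CanonicalSystem (N : ℕ) (A Φp Φm : ℂ → Matrix (Fin N) (Fin N) ℂ)
    (k : Fin N → ℤ) : Prop :=
  (∀ i j, ContinuousOn (fun ζ => Φp ζ i j) (closedBall 0 1)) ∧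
  (∀ i j, DifferentiableOn ℂ (fun ζ => Φp ζ i j) (ball 0 1)) ∧
  (∀ ζ ∈ closedBall (0 : ℂ) 1, IsUnit (Φp ζ)) ∧
  (∀ i j, ContinuousOn (fun ζ => Φm ζ i j) {z : ℂ | 1 ≤ ‖z‖}) ∧
  (∀ i j, DifferentiableOn ℂ (fun ζ => Φm ζ i j) {z : ℂ | 1 < ‖z‖}) ∧
  (∀ ζ : ℂ, 1 ≤ ‖ζ‖ → IsUnit (Φm ζ)) ∧
  (∀ ζ : ℂ, ‖ζ‖ = 1 → Φp ζ = A ζ * Φm ζ) ∧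
  (∀ j, HasOrderAtInfty (fun z => (fun i => Φm z i j : Fin N → ℂ)) (k j)) ∧
  HasOrderAtInfty (fun z => (Φm z).det) (∑ j, k j)

namespace PIhelp

open Metric Set Finset Complex
open scoped NNReal

variable {N : ℕ}



variable {N : ℕ}

lemma det_eq_sum (M : Matrix (Fin N) (Fin N) ℂ) :
    M.det = ∑ σ : Equiv.Perm (Fin N), ((Equiv.Perm.sign σ : ℤ) : ℂ) * ∏ i, M (σ i) i :=
  Matrix.det_apply' M

lemma contOn_det {M : ℂ → Matrix (Fin N) (Fin N) ℂ} {s : Set ℂ}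
    (h : ∀ i j, ContinuousOn (fun z => M z i j) s) :
    ContinuousOn (fun z => (M z).det) s := by
  simp only [det_eq_sum]
  apply continuousOn_finset_sum
  intro σ _
  exact continuousOn_const.mul (continuousOn_finset_prod _ fun i _ => h (σ i) i)

lemma diffOn_det {M : ℂ → Matrix (Fin N) (Fin N) ℂ} {s : Set ℂ}
    (h : ∀ i j, DifferentiableOn ℂ (fun z => M z i j) s) :
    DifferentiableOn ℂ (fun z => (M z).det) s := by
  simp only [det_eq_sum]
  apply DifferentiableOn.fun_sum
  intro σ _
  exact (DifferentiableOn.fun_finsetProd (u := Finset.univ) fun i _ => h (σ i) i).const_mul _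

/-- entry formula for `P⁻¹ * Q`. -/
lemma inv_mul_entry (P Q : Matrix (Fin N) (Fin N) ℂ) (i j : Fin N) :
    (P⁻¹ * Q) i j = ∑ s : Fin N, (P.det)⁻¹ * P.adjugate i s * Q s j := by
  rw [Matrix.mul_apply]
  congr 1
  funext s
  rw [Matrix.inv_def, Matrix.smul_apply, Ring.inverse_eq_inv, smul_eq_mul]

lemma contOn_adjugate_entry {P : ℂ → Matrix (Fin N) (Fin N) ℂ} {s : Set ℂ}
    (hP : ∀ i j, ContinuousOn (fun z => P z i j) s) (i' j' : Fin N) :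
    ContinuousOn (fun z => (P z).adjugate i' j') s := by
  have : (fun z => (P z).adjugate i' j')
      = fun z => ((P z).updateRow j' (Pi.single i' 1)).det := by
    funext z; rw [Matrix.adjugate_apply]
  rw [this]
  apply contOn_det
  intro a b
  by_cases hab : a = j'
  · simp only [Matrix.updateRow_apply, hab, if_true]
    exact continuousOn_const
  · simp only [Matrix.updateRow_apply, hab, if_false]
    exact hP a b

lemma diffOn_adjugate_entry {P : ℂ → Matrix (Fin N) (Fin N) ℂ} {s : Set ℂ}
    (hP : ∀ i j, DifferentiableOn ℂ (fun z => P z i j) s) (i' j' : Fin N) :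
    DifferentiableOn ℂ (fun z => (P z).adjugate i' j') s := by
  have : (fun z => (P z).adjugate i' j')
      = fun z => ((P z).updateRow j' (Pi.single i' 1)).det := by
    funext z; rw [Matrix.adjugate_apply]
  rw [this]
  apply diffOn_det
  intro a b
  by_cases hab : a = j'
  · simp only [Matrix.updateRow_apply, hab, if_true]
    exact differentiableOn_const _
  · simp only [Matrix.updateRow_apply, hab, if_false]
    exact hP a b

lemma contOn_inv_mul_entry {P Q : ℂ → Matrix (Fin N) (Fin N) ℂ} {s : Set ℂ}
    (hP : ∀ i j, ContinuousOn (fun z => P z i j) s)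
    (hQ : ∀ i j, ContinuousOn (fun z => Q z i j) s)
    (hu : ∀ z ∈ s, IsUnit (P z)) (i j : Fin N) :
    ContinuousOn (fun z => ((P z)⁻¹ * Q z) i j) s := by
  simp only [inv_mul_entry]
  apply continuousOn_finset_sum
  intro c _
  have hdetne : ∀ z ∈ s, (P z).det ≠ 0 := fun z hz =>
    ((Matrix.isUnit_iff_isUnit_det _).1 (hu z hz)).ne_zero
  exact (((contOn_det hP).inv₀ hdetne).mul (contOn_adjugate_entry hP i c)).mul (hQ c j)

lemma diffOn_inv_mul_entry {P Q : ℂ → Matrix (Fin N) (Fin N) ℂ} {s : Set ℂ}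
    (hP : ∀ i j, DifferentiableOn ℂ (fun z => P z i j) s)
    (hQ : ∀ i j, DifferentiableOn ℂ (fun z => Q z i j) s)
    (hu : ∀ z ∈ s, IsUnit (P z)) (i j : Fin N) :
    DifferentiableOn ℂ (fun z => ((P z)⁻¹ * Q z) i j) s := by
  simp only [inv_mul_entry]
  apply DifferentiableOn.fun_sum
  intro c _
  have hdetne : ∀ z ∈ s, (P z).det ≠ 0 := fun z hz =>
    ((Matrix.isUnit_iff_isUnit_det _).1 (hu z hz)).ne_zero
  exact (((diffOn_det hP).inv hdetne).mul (diffOn_adjugate_entry hP i c)).mul (hQ c j)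

/-- Cramer-type formula for an entry of `P⁻¹ * Q`. -/
lemma inv_mul_entry_cramer (P Q : Matrix (Fin N) (Fin N) ℂ) (hu : IsUnit P)
    (i j : Fin N) :
    (P⁻¹ * Q) i j = (P.det)⁻¹ * (P.updateCol i (fun s => Q s j)).det := by
  have hdet : IsUnit P.det := (Matrix.isUnit_iff_isUnit_det _).1 hu
  have h1 : (P⁻¹ * Q) i j = (P⁻¹.mulVec (fun s => Q s j)) i := by
    simp [Matrix.mul_apply, Matrix.mulVec, dotProduct]
  have h2 : P.det • (P⁻¹.mulVec (fun s => Q s j)) = Matrix.cramer P (fun s => Q s j) :=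
    Matrix.det_smul_inv_mulVec_eq_cramer P _ hdet
  have hdne : P.det ≠ 0 := hdet.ne_zero
  have h3 : P⁻¹.mulVec (fun s => Q s j) = (P.det)⁻¹ • Matrix.cramer P (fun s => Q s j) := by
    rw [← h2, smul_smul, inv_mul_cancel₀ hdne, one_smul]
  rw [h1, h3]
  simp only [Pi.smul_apply, smul_eq_mul]
  rw [Matrix.cramer_apply]


lemma norm_det_le (B : Matrix (Fin N) (Fin N) ℂ) (b : Fin N → ℝ) (hb : ∀ c, 0 ≤ b c)
    (h : ∀ r c, ‖B r c‖ ≤ b c) :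
    ‖B.det‖ ≤ (Nat.factorial N : ℝ) * ∏ c, b c := by
  rw [det_eq_sum]
  calc ‖∑ σ : Equiv.Perm (Fin N), ((Equiv.Perm.sign σ : ℤ) : ℂ) * ∏ i, B (σ i) i‖
      ≤ ∑ σ : Equiv.Perm (Fin N), ‖((Equiv.Perm.sign σ : ℤ) : ℂ) * ∏ i, B (σ i) i‖ :=
        norm_sum_le _ _
    _ ≤ ∑ _σ : Equiv.Perm (Fin N), ∏ c, b c := by
        apply Finset.sum_le_sum
        intro σ _
        rw [norm_mul, norm_prod]
        have h1 : ‖((Equiv.Perm.sign σ : ℤ) : ℂ)‖ = 1 := by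
          rcases Int.units_eq_one_or (Equiv.Perm.sign σ) with h' | h' <;> simp [h']
        rw [h1, one_mul]
        exact Finset.prod_le_prod (fun c _ => norm_nonneg _) (fun c _ => h _ c)
    _ = (Nat.factorial N : ℝ) * ∏ c, b c := by
        rw [Finset.sum_const, Finset.card_univ, Fintype.card_perm, Fintype.card_fin,
          nsmul_eq_mul]

/-- If a matrix has a large zero block, its determinant vanishes. -/
lemma det_eq_zero_of_block (B : Matrix (Fin N) (Fin N) ℂ) (r : Fin N)
    (h : ∀ i j, r ≤ i → j ≤ r → B i j = 0) : B.det = 0 := by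
  rw [det_eq_sum]
  apply Finset.sum_eq_zero
  intro σ _
  suffices hj : ∃ j, j ≤ r ∧ r ≤ σ j by
    obtain ⟨j, hj1, hj2⟩ := hj
    have : ∏ i, B (σ i) i = 0 := Finset.prod_eq_zero (Finset.mem_univ j) (h (σ j) j hj2 hj1)
    rw [this, mul_zero]
  by_contra hcon
  push_neg at hcon
  have hmaps : ∀ j ∈ Finset.Iic r, σ j ∈ Finset.Iio r := by
    intro j hj
    simp only [Finset.mem_Iic] at hj
    simp only [Finset.mem_Iio]
    exact hcon j hj
  have hcard : (Finset.Iic r).card ≤ (Finset.Iio r).card :=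
    Finset.card_le_card_of_injOn σ hmaps (σ.injective.injOn)
  have hss : Finset.Iio r ⊂ Finset.Iic r :=
    ⟨Finset.Iio_subset_Iic_self, fun hsub => by
      have := hsub (Finset.mem_Iic.2 le_rfl); simp at this⟩
  exact absurd hcard (not_le.2 (Finset.card_lt_card hss))

/-- product of zpow. -/
lemma prod_zpow_eq {a : ℝ} (ha : a ≠ 0) (f : Fin N → ℤ) :
    ∏ c, a ^ f c = a ^ (∑ c, f c) := by
  classical
  induction (Finset.univ : Finset (Fin N)) using Finset.cons_induction with
  | empty => simp
  | cons i s hi ih => rw [Finset.prod_cons, Finset.sum_cons, zpow_add₀ ha, ih]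




lemma order_upper {E : Type*} [NormedAddCommGroup E] [NormedSpace ℂ E]
    {h : ℂ → E} {k : ℤ} (H : HasOrderAtInfty h k) :
    ∃ M R : ℝ, 1 ≤ R ∧ ∀ z : ℂ, R ≤ ‖z‖ → ‖h z‖ ≤ M * ‖z‖ ^ (-k) := by
  obtain ⟨r, hr, g, hg, -, hform⟩ := H
  have hsub : closedBall (0 : ℂ) (r / 2) ⊆ ball 0 r := by
    intro u hu
    rw [mem_closedBall_zero_iff] at hu
    rw [mem_ball_zero_iff]
    linarith
  obtain ⟨M, hM⟩ := (isCompact_closedBall (0 : ℂ) (r / 2)).exists_bound_of_continuousOn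
    ((hg.continuousOn).mono hsub)
  refine ⟨M, 2 / r + r⁻¹ + 1, le_add_of_nonneg_left (by positivity), fun z hz => ?_⟩
  have hrinv : r⁻¹ < ‖z‖ := by
    have : (0 : ℝ) < 2 / r := by positivity
    linarith
  have hz0 : (0 : ℝ) < ‖z‖ := lt_trans (by positivity) hrinv
  have hzinv : z⁻¹ ∈ closedBall (0 : ℂ) (r / 2) := by
    rw [mem_closedBall_zero_iff, norm_inv]
    rw [inv_le_comm₀ hz0 (by positivity)]
    have hrp : (0:ℝ) < r⁻¹ := by positivity
    have : 2 / r ≤ ‖z‖ := by linarith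
    calc (r/2)⁻¹ = 2 / r := by rw [inv_div]
    _ ≤ ‖z‖ := this
  rw [hform z hrinv, norm_smul, norm_zpow]
  rw [mul_comm]
  exact mul_le_mul_of_nonneg_right (hM _ hzinv) (zpow_nonneg (norm_nonneg z) _)

lemma order_lower {h : ℂ → ℂ} {k : ℤ} (H : HasOrderAtInfty h k) :
    ∃ δ R : ℝ, 0 < δ ∧ 1 ≤ R ∧ ∀ z : ℂ, R ≤ ‖z‖ → δ * ‖z‖ ^ (-k) ≤ ‖h z‖ := by
  obtain ⟨r, hr, g, hg, hg0, hform⟩ := H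
  have h0mem : (0 : ℂ) ∈ ball (0 : ℂ) r := mem_ball_self hr
  have hcont : ContinuousAt g 0 :=
    (hg.continuousOn 0 h0mem).continuousAt (isOpen_ball.mem_nhds h0mem)
  have hpos : (0 : ℝ) < ‖g 0‖ / 2 := by
    have := norm_pos_iff.2 hg0; linarith
  obtain ⟨ε, hε, hball⟩ := Metric.continuousAt_iff.1 hcont (‖g 0‖ / 2) hpos
  refine ⟨‖g 0‖ / 2, ε⁻¹ + r⁻¹ + 1, hpos, le_add_of_nonneg_left (by positivity), fun z hz => ?_⟩
  have hrinv : r⁻¹ < ‖z‖ := by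
    have : (0 : ℝ) < ε⁻¹ := by positivity
    linarith
  have hz0 : (0 : ℝ) < ‖z‖ := lt_trans (by positivity) hrinv
  have hzinv : dist z⁻¹ 0 < ε := by
    rw [dist_zero_right, norm_inv]
    rw [inv_lt_comm₀ hz0 hε]
    have : (0:ℝ) < r⁻¹ := by positivity
    linarith
  have hglow : ‖g 0‖ / 2 ≤ ‖g z⁻¹‖ := by
    have hd := hball hzinv
    rw [dist_eq_norm] at hd
    have := norm_sub_norm_le (g z⁻¹) (g 0)
    have habs : ‖g 0‖ - ‖g z⁻¹‖ ≤ ‖g z⁻¹ - g 0‖ := by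
      have := norm_sub_norm_le (g 0) (g z⁻¹)
      rwa [norm_sub_rev] at this
    linarith
  rw [hform z hrinv, norm_smul, norm_zpow, mul_comm (‖g 0‖ / 2)]
  exact mul_le_mul_of_nonneg_left hglow (zpow_nonneg (norm_nonneg z) _)

lemma decay_zero {f : ℂ → ℂ} (hf : Differentiable ℂ f) {M R : ℝ}
    (hb : ∀ z : ℂ, R ≤ ‖z‖ → ‖f z‖ ≤ M * ‖z‖⁻¹) : ∀ z, f z = 0 := by
  have hbounded : Bornology.IsBounded (Set.range f) := by
    set R' : ℝ := max R 1 with hR'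
    obtain ⟨C, hC⟩ := (isCompact_closedBall (0 : ℂ) R').exists_bound_of_continuousOn
      hf.continuous.continuousOn
    rw [isBounded_iff_forall_norm_le]
    refine ⟨max C |M|, ?_⟩
    rintro x ⟨z, rfl⟩
    by_cases hz : ‖z‖ ≤ R'
    · exact le_trans (hC z (mem_closedBall_zero_iff.2 hz)) (le_max_left _ _)
    · push_neg at hz
      have h1 : (1:ℝ) ≤ ‖z‖ := le_trans (le_max_right R 1) hz.le
      have hR : R ≤ ‖z‖ := le_trans (le_max_left R 1) hz.le
      have : ‖f z‖ ≤ M * ‖z‖⁻¹ := hb z hR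
      have h2 : M * ‖z‖⁻¹ ≤ |M| := by
        calc M * ‖z‖⁻¹ ≤ |M| * ‖z‖⁻¹ :=
              mul_le_mul_of_nonneg_right (le_abs_self M) (by positivity)
          _ ≤ |M| * 1 := by
              apply mul_le_mul_of_nonneg_left _ (abs_nonneg M)
              rw [inv_le_one_iff₀]; right; exact h1
          _ = |M| := mul_one _
      exact le_trans (le_trans this h2) (le_max_right _ _)
  intro z
  have hconst : ∀ n : ℕ, f z = f ((n : ℝ) : ℂ) := fun n =>
    hf.apply_eq_apply_of_bounded hbounded _ _
  have hev : ∀ᶠ n : ℕ in Filter.atTop, ‖f z‖ ≤ M * (n : ℝ)⁻¹ := by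
    rw [Filter.eventually_atTop]
    obtain ⟨n₀, hn₀⟩ := exists_nat_ge R
    refine ⟨n₀, fun n hn => ?_⟩
    rw [hconst n]
    have : R ≤ ‖((n:ℝ) : ℂ)‖ := by
      rw [Complex.norm_real, Real.norm_natCast]
      exact le_trans hn₀ (Nat.cast_le.2 hn)
    have := hb _ this
    rwa [Complex.norm_real, Real.norm_natCast] at this
  have ht : Filter.Tendsto (fun n : ℕ => M * (n : ℝ)⁻¹) Filter.atTop (nhds 0) := by
    have := tendsto_inv_atTop_nhds_zero_nat.const_mul M
    simpa using this
  have : ‖f z‖ ≤ 0 := ge_of_tendsto ht hev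
  have := le_antisymm this (norm_nonneg _)
  rwa [norm_eq_zero] at this




lemma glue_entire {fp fm : ℂ → ℂ}
    (hpc : ContinuousOn fp (closedBall 0 1)) (hpd : DifferentiableOn ℂ fp (ball 0 1))
    (hmc : ContinuousOn fm {z : ℂ | 1 ≤ ‖z‖}) (hmd : DifferentiableOn ℂ fm {z : ℂ | 1 < ‖z‖})
    (heq : ∀ z : ℂ, ‖z‖ = 1 → fp z = fm z) :
    Differentiable ℂ (fun z => if ‖z‖ ≤ 1 then fp z else fm z) := by
  set f : ℂ → ℂ := fun z => if ‖z‖ ≤ 1 then fp z else fm z with hf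
  have hopen : IsOpen {z : ℂ | 1 < ‖z‖} := isOpen_lt continuous_const continuous_norm
  have hmd' : ∀ z : ℂ, 1 < ‖z‖ → DifferentiableAt ℂ fm z := fun z hz =>
    (hmd z hz).differentiableAt (hopen.mem_nhds hz)
  have hpd' : ∀ z : ℂ, ‖z‖ < 1 → DifferentiableAt ℂ fp z := fun z hz =>
    (hpd z (mem_ball_zero_iff.2 hz)).differentiableAt (isOpen_ball.mem_nhds (mem_ball_zero_iff.2 hz))
  have f_eq_m : ∀ z : ℂ, 1 ≤ ‖z‖ → f z = fm z := by
    intro z hz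
    by_cases h : ‖z‖ ≤ 1
    · have : ‖z‖ = 1 := le_antisymm h hz
      simp only [hf, if_pos h]; exact heq z this
    · simp only [hf, if_neg h]
  have f_eq_p : ∀ z : ℂ, ‖z‖ ≤ 1 → f z = fp z := fun z hz => by simp only [hf, if_pos hz]
  -- circle integrability of the relevant integrands
  have hfmcont : ∀ (R : ℝ), 1 ≤ R → ContinuousOn f (sphere 0 R) := by
    intro R hR
    have hsub : sphere (0:ℂ) R ⊆ {z : ℂ | 1 ≤ ‖z‖} := by
      intro z hz; rw [mem_sphere_zero_iff_norm] at hz; rw [mem_setOf_eq, hz]; exact hR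
    exact (hmc.mono hsub).congr (fun z hz => f_eq_m z (hsub hz))
  -- The main representation formula
  have hrep : ∀ R' : ℝ≥0, 1 < (R' : ℝ) → ∀ w ∈ ball (0 : ℂ) (R' : ℝ),
      (2 * Real.pi * I : ℂ)⁻¹ • (∮ z in C(0, (R' : ℝ)), (z - w)⁻¹ • f z) = f w := by
    intro R' hR1
    set R : ℝ := (R' : ℝ) with hRdef
    have hR0 : (0 : ℝ) < R := lt_trans one_pos hR1
    have hint : CircleIntegrable f 0 R := (hfmcont R hR1.le).circleIntegrable hR0.le
    have main : ∀ w ∈ ball (0 : ℂ) R, ‖w‖ ≠ 1 →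
        (2 * Real.pi * I : ℂ)⁻¹ • (∮ z in C(0, R), (z - w)⁻¹ • f z) = f w := by
      intro w hw hw1
      rw [mem_ball_zero_iff] at hw
      rcases lt_or_gt_of_ne hw1 with h1 | h1
      · -- interior case
        have hcau : (2 * Real.pi * I : ℂ)⁻¹ • (∮ z in C(0, (1:ℝ)), (z - w)⁻¹ • fp z) = fp w :=
          Complex.two_pi_I_inv_smul_circleIntegral_sub_inv_smul_of_differentiable_on_off_countable
            (s := ∅) countable_empty (mem_ball_zero_iff.2 h1) hpc
            (fun x hx => hpd' x (mem_ball_zero_iff.1 hx.1))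
        set g : ℂ → ℂ := fun z => (z - w)⁻¹ • fm z with hg
        have hsub1 : ∀ z : ℂ, 1 ≤ ‖z‖ → z - w ≠ 0 := by
          intro z hz
          rw [sub_ne_zero]
          intro hc; rw [hc] at hz; exact absurd h1 (not_lt.2 hz)
        have e1 : (∮ z in C(0, (1:ℝ)), (z - w)⁻¹ • fp z) = ∮ z in C(0, (1:ℝ)), g z := by
          apply circleIntegral.integral_congr zero_le_one
          intro z hz
          rw [mem_sphere_zero_iff_norm] at hz
          show (z - w)⁻¹ • fp z = (z - w)⁻¹ • fm z
          rw [heq z hz]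
        have e2 : (∮ z in C(0, R), g z) = ∮ z in C(0, (1:ℝ)), g z := by
          apply circleIntegral_eq_of_differentiable_on_annulus_off_countable one_pos hR1.le
            (s := ∅) countable_empty
          · intro z hz
            obtain ⟨hz1, hz2⟩ := hz
            have hz3 : 1 ≤ ‖z‖ := by
              by_contra hcon
              exact hz2 (mem_ball_zero_iff.2 (not_le.1 hcon))
            exact ((continuousWithinAt_id.sub continuousWithinAt_const).inv₀
              (hsub1 z hz3)).smul ((hmc z hz3).mono (by
                intro u hu
                obtain ⟨hu1, hu2⟩ := hu
                have : 1 ≤ ‖u‖ := by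
                  by_contra hcon
                  exact hu2 (mem_ball_zero_iff.2 (not_le.1 hcon))
                exact this))
          · intro z hz
            obtain ⟨⟨hz1, hz2⟩, -⟩ := hz
            have hz3 : 1 < ‖z‖ := by
              by_contra hcon
              exact hz2 (mem_closedBall_zero_iff.2 (not_lt.1 hcon))
            exact ((differentiableAt_id.sub_const w).inv (hsub1 z hz3.le)).smul (hmd' z hz3)
        have e3 : (∮ z in C(0, R), (z - w)⁻¹ • f z) = ∮ z in C(0, R), g z := by
          apply circleIntegral.integral_congr hR0.le
          intro z hz
          rw [mem_sphere_zero_iff_norm] at hz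
          show (z - w)⁻¹ • f z = (z - w)⁻¹ • fm z
          rw [f_eq_m z (by rw [hz]; exact hR1.le)]
        rw [e3, e2, ← e1, hcau, f_eq_p w h1.le]
      · -- exterior case
        set g : ℂ → ℂ := dslope fm w with hg
        have hwne : ∀ z : ℂ, ‖z‖ ≠ ‖w‖ → z ≠ w := fun z hz hc => hz (by rw [hc])
        have hann_mem : closedBall (0:ℂ) R \ ball 0 1 ∈ nhds w := by
          rw [_root_.mem_nhds_iff]
          refine ⟨{z : ℂ | 1 < ‖z‖} ∩ ball 0 R, ?_, hopen.inter isOpen_ball, ⟨h1, mem_ball_zero_iff.2 hw⟩⟩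
          rintro z ⟨hz1, hz2⟩
          exact ⟨ball_subset_closedBall hz2, fun hc => absurd (mem_ball_zero_iff.1 hc) (not_lt.2 hz1.le)⟩
        have hgc : ContinuousOn g (closedBall (0:ℂ) R \ ball 0 1) := by
          rw [hg]
          refine (continuousOn_dslope hann_mem).2 ⟨hmc.mono ?_, hmd' w h1⟩
          rintro z ⟨hz1, hz2⟩
          have : 1 ≤ ‖z‖ := by
            by_contra hcon
            exact hz2 (mem_ball_zero_iff.2 (not_le.1 hcon))
          exact this
        have hgd : ∀ z ∈ (ball (0:ℂ) R \ closedBall 0 1) \ {w}, DifferentiableAt ℂ g z := by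
          rintro z ⟨⟨hz1, hz2⟩, hz3⟩
          have hz4 : 1 < ‖z‖ := by
            by_contra hcon
            exact hz2 (mem_closedBall_zero_iff.2 (not_lt.1 hcon))
          rw [hg]
          exact (differentiableAt_dslope_of_ne (by simpa using hz3)).2 (hmd' z hz4)
        have E1 : (∮ z in C(0, R), g z) = ∮ z in C(0, (1:ℝ)), g z :=
          circleIntegral_eq_of_differentiable_on_annulus_off_countable one_pos hR1.le
            (countable_singleton w) hgc hgd
        -- the inner integral is zero
        have hc1 : ∀ z : ℂ, ‖z‖ ≤ 1 → z - w ≠ 0 := by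
          intro z hz
          rw [sub_ne_zero]
          intro hc; rw [hc] at hz; exact absurd hz (not_le.2 h1)
        have int1 : CircleIntegrable (fun z => (z - w)⁻¹ • fp z) 0 1 := by
          apply ContinuousOn.circleIntegrable zero_le_one
          intro z hz
          rw [mem_sphere_zero_iff_norm] at hz
          exact ((continuousWithinAt_id.sub continuousWithinAt_const).inv₀
            (hc1 z hz.le)).smul ((hpc z (mem_closedBall_zero_iff.2 hz.le)).mono
              sphere_subset_closedBall)
        have int2 : CircleIntegrable (fun z => (z - w)⁻¹ • fm w) 0 1 := by
          apply ContinuousOn.circleIntegrable zero_le_one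
          intro z hz
          rw [mem_sphere_zero_iff_norm] at hz
          exact ((continuousWithinAt_id.sub continuousWithinAt_const).inv₀
            (hc1 z hz.le)).smul continuousWithinAt_const
        have Z1 : (∮ z in C(0, (1:ℝ)), (z - w)⁻¹ • fp z) = 0 := by
          apply circleIntegral_eq_zero_of_differentiable_on_off_countable zero_le_one
            (s := ∅) countable_empty
          · intro z hz
            exact ((continuousWithinAt_id.sub continuousWithinAt_const).inv₀
              (hc1 z (mem_closedBall_zero_iff.1 hz))).smul (hpc z hz)
          · intro z hz
            have hz1 : ‖z‖ < 1 := mem_ball_zero_iff.1 hz.1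
            exact ((differentiableAt_id.sub_const w).inv (hc1 z hz1.le)).smul (hpd' z hz1)
        have Z2 : (∮ z in C(0, (1:ℝ)), (z - w)⁻¹ • fm w) = 0 := by
          apply circleIntegral_eq_zero_of_differentiable_on_off_countable zero_le_one
            (s := ∅) countable_empty
          · intro z hz
            exact ((continuousWithinAt_id.sub continuousWithinAt_const).inv₀
              (hc1 z (mem_closedBall_zero_iff.1 hz))).smul continuousWithinAt_const
          · intro z hz
            have hz1 : ‖z‖ < 1 := mem_ball_zero_iff.1 hz.1
            exact ((differentiableAt_id.sub_const w).inv (hc1 z hz1.le)).smul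
              (differentiableAt_const _)
        have E2 : (∮ z in C(0, (1:ℝ)), g z) = 0 := by
          have hcg : (∮ z in C(0, (1:ℝ)), g z)
              = ∮ z in C(0, (1:ℝ)), ((z - w)⁻¹ • fp z - (z - w)⁻¹ • fm w) := by
            apply circleIntegral.integral_congr zero_le_one
            intro z hz
            rw [mem_sphere_zero_iff_norm] at hz
            have hzw : z ≠ w := fun hc => by rw [hc] at hz; exact (ne_of_gt h1) hz
            show dslope fm w z = (z - w)⁻¹ • fp z - (z - w)⁻¹ • fm w
            rw [dslope_of_ne fm hzw, slope_def_module, heq z hz, smul_sub]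
          rw [hcg, circleIntegral.integral_sub int1 int2, Z1, Z2, sub_zero]
        -- expand the outer integral
        have int3 : CircleIntegrable (fun z => (z - w)⁻¹ • fm z) 0 R := by
          apply ContinuousOn.circleIntegrable hR0.le
          intro z hz
          rw [mem_sphere_zero_iff_norm] at hz
          have hz1 : (1:ℝ) ≤ ‖z‖ := by rw [hz]; exact hR1.le
          have hzw : z - w ≠ 0 := by
            rw [sub_ne_zero]; intro hc; rw [hc] at hz; rw [hz] at hw; exact lt_irrefl _ hw
          exact ((continuousWithinAt_id.sub continuousWithinAt_const).inv₀ hzw).smul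
            ((hmc z hz1).mono (by intro u hu; rw [mem_sphere_zero_iff_norm] at hu
                                  rw [mem_setOf_eq, hu]; exact hR1.le))
        have int4 : CircleIntegrable (fun z => (z - w)⁻¹ • fm w) 0 R := by
          apply ContinuousOn.circleIntegrable hR0.le
          intro z hz
          rw [mem_sphere_zero_iff_norm] at hz
          have hzw : z - w ≠ 0 := by
            rw [sub_ne_zero]; intro hc; rw [hc] at hz; rw [hz] at hw; exact lt_irrefl _ hw
          exact ((continuousWithinAt_id.sub continuousWithinAt_const).inv₀ hzw).smul
            continuousWithinAt_const
        have E3 : (∮ z in C(0, R), g z)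
            = (∮ z in C(0, R), (z - w)⁻¹ • fm z) - (2 * Real.pi * I : ℂ) • fm w := by
          have hcg : (∮ z in C(0, R), g z)
              = ∮ z in C(0, R), ((z - w)⁻¹ • fm z - (z - w)⁻¹ • fm w) := by
            apply circleIntegral.integral_congr hR0.le
            intro z hz
            rw [mem_sphere_zero_iff_norm] at hz
            have hzw : z ≠ w := by intro hc; rw [hc] at hz; rw [hz] at hw; exact lt_irrefl _ hw
            show dslope fm w z = (z - w)⁻¹ • fm z - (z - w)⁻¹ • fm w
            rw [dslope_of_ne fm hzw, slope_def_module, smul_sub]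
          rw [hcg, circleIntegral.integral_sub int3 int4]
          congr 1
          rw [circleIntegral.integral_smul_const, circleIntegral.integral_sub_inv_of_mem_ball
            (mem_ball_zero_iff.2 hw)]
        have E4 : (∮ z in C(0, R), (z - w)⁻¹ • f z) = ∮ z in C(0, R), (z - w)⁻¹ • fm z := by
          apply circleIntegral.integral_congr hR0.le
          intro z hz
          rw [mem_sphere_zero_iff_norm] at hz
          show (z - w)⁻¹ • f z = (z - w)⁻¹ • fm z
          rw [f_eq_m z (by rw [hz]; exact hR1.le)]
        have key : (∮ z in C(0, R), (z - w)⁻¹ • fm z) = (2 * Real.pi * I : ℂ) • fm w := by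
          have h0 : (∮ z in C(0, R), g z) = 0 := E1.trans E2
          rw [E3] at h0
          linear_combination h0
        rw [E4, key, inv_smul_smul₀ Complex.two_pi_I_ne_zero, f_eq_m w h1.le]
    -- boundary case by continuity
    intro w hw
    by_cases hw1 : ‖w‖ = 1
    · have hR'pos : 0 < R' := by
        rw [← NNReal.coe_lt_coe]; exact lt_trans one_pos hR1
      have hps := hasFPowerSeriesOn_cauchy_integral (f := f) hint hR'pos
      have hFc : ContinuousAt (fun w => (2 * Real.pi * I : ℂ)⁻¹ •
          (∮ z in C(0, R), (z - w)⁻¹ • f z)) w := by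
        apply hps.continuousOn.continuousAt
        apply EMetric.isOpen_ball.mem_nhds
        rwa [Metric.emetric_ball_nnreal]
      -- sequence from inside
      set u : ℕ → ℂ := fun n => (((1 : ℝ) - ((n : ℝ) + 2)⁻¹ : ℝ) : ℂ) * w with hu
      have h2 : Filter.Tendsto (fun n : ℕ => ((1 : ℝ) - ((n : ℝ) + 2)⁻¹ : ℝ)) Filter.atTop (nhds 1) := by
        have : Filter.Tendsto (fun n : ℕ => ((n : ℝ) + 2)⁻¹) Filter.atTop (nhds 0) := by
          apply Filter.Tendsto.inv_tendsto_atTop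
          apply Filter.tendsto_atTop_add_const_right
          exact tendsto_natCast_atTop_atTop
        simpa using (tendsto_const_nhds (x := (1:ℝ))).sub this
      have hulim : Filter.Tendsto u Filter.atTop (nhds w) := by
        have h3 : Filter.Tendsto (fun n : ℕ => (((1 : ℝ) - ((n : ℝ) + 2)⁻¹ : ℝ) : ℂ))
            Filter.atTop (nhds (((1:ℝ) : ℂ))) :=
          (Complex.continuous_ofReal.tendsto (1 : ℝ)).comp h2
        have h4 := h3.mul (tendsto_const_nhds (x := w))
        simpa [hu] using h4
      have hnorm : ∀ n : ℕ, ‖u n‖ < 1 := by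
        intro n
        rw [hu]
        simp only [norm_mul, Complex.norm_real, Real.norm_eq_abs]
        have hp2 : (0:ℝ) < ((n:ℝ) + 2)⁻¹ := by positivity
        have hl1 : ((n:ℝ) + 2)⁻¹ ≤ 2⁻¹ := by
          apply inv_anti₀ (by norm_num)
          have : (0:ℝ) ≤ (n:ℝ) := Nat.cast_nonneg n
          linarith
        have : |1 - ((n:ℝ) + 2)⁻¹| < 1 := by
          rw [abs_lt]; constructor <;> linarith
        calc |1 - ((n:ℝ) + 2)⁻¹| * ‖w‖ = |1 - ((n:ℝ) + 2)⁻¹| * 1 := by rw [hw1]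
          _ < 1 := by rw [mul_one]; exact this
      have humem : ∀ n : ℕ, u n ∈ ball (0:ℂ) R :=
        fun n => mem_ball_zero_iff.2 (lt_trans (hnorm n) hR1)
      have heval : ∀ n : ℕ, (2 * Real.pi * I : ℂ)⁻¹ •
          (∮ z in C(0, R), (z - u n)⁻¹ • f z) = f (u n) :=
        fun n => main (u n) (humem n) (ne_of_lt (hnorm n))
      -- limits
      have hlhs : Filter.Tendsto (fun n => (2 * Real.pi * I : ℂ)⁻¹ •
          (∮ z in C(0, R), (z - u n)⁻¹ • f z)) Filter.atTop
          (nhds ((2 * Real.pi * I : ℂ)⁻¹ • (∮ z in C(0, R), (z - w)⁻¹ • f z))) :=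
        (hFc.tendsto).comp hulim
      have hrhs : Filter.Tendsto (fun n => f (u n)) Filter.atTop (nhds (f w)) := by
        have hfw : f w = fp w := f_eq_p w (le_of_eq hw1)
        have hfn : ∀ n, f (u n) = fp (u n) := fun n => f_eq_p (u n) (hnorm n).le
        rw [hfw]
        simp only [hfn]
        have hcw : ContinuousWithinAt fp (closedBall 0 1) w :=
          hpc w (mem_closedBall_zero_iff.2 (le_of_eq hw1))
        apply hcw.tendsto.comp
        rw [tendsto_nhdsWithin_iff]
        exact ⟨hulim, Filter.Eventually.of_forall fun n =>
          mem_closedBall_zero_iff.2 (hnorm n).le⟩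
      exact tendsto_nhds_unique (hlhs.congr heval) hrhs
    · exact main w hw hw1
  -- conclude differentiability
  intro z₀
  set R' : ℝ≥0 := ⟨‖z₀‖ + 2, by positivity⟩ with hR'
  have hR1 : 1 < (R' : ℝ) := by
    simp only [hR', NNReal.coe_mk]
    change _ < ‖z₀‖ + 2
    have := norm_nonneg z₀
    linarith
  have hR'pos : 0 < R' := by
    rw [← NNReal.coe_lt_coe]; exact lt_trans one_pos hR1
  have hint : CircleIntegrable f 0 (R' : ℝ) :=
    (hfmcont _ hR1.le).circleIntegrable (lt_trans one_pos hR1).le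
  have hps := hasFPowerSeriesOn_cauchy_integral (f := f) hint hR'pos
  have hz₀ : z₀ ∈ ball (0:ℂ) (R' : ℝ) := by
    rw [mem_ball_zero_iff]
    simp only [hR', NNReal.coe_mk]
    change _ < ‖z₀‖ + 2
    linarith
  have hz₀' : z₀ ∈ Metric.eball (0:ℂ) (R' : ENNReal) := by
    rw [Metric.emetric_ball_nnreal]; exact hz₀
  have hFd : DifferentiableAt ℂ (fun w => (2 * Real.pi * I : ℂ)⁻¹ •
      (∮ z in C(0, (R' : ℝ)), (z - w)⁻¹ • f z)) z₀ :=
    (hps.differentiableOn z₀ hz₀').differentiableAt (EMetric.isOpen_ball.mem_nhds hz₀')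
  apply hFd.congr_of_eventuallyEq
  apply Filter.eventuallyEq_of_mem (isOpen_ball.mem_nhds hz₀)
  intro w hw
  exact (hrep R' hR1 w hw).symm


lemma key (A Φp Φm Ψp Ψm : ℂ → Matrix (Fin N) (Fin N) ℂ)
    (k l : Fin N → ℤ)
    (hΦ : CanonicalSystem N A Φp Φm k) (hΨ : CanonicalSystem N A Ψp Ψm l)
    (hk : Antitone k) (hl : Antitone l) (r : Fin N) (hr : k r < l r) : False := by
  obtain ⟨hpc, hpd, hpu, hmc, hmd, hmu, hrel, hcol, hdet⟩ := hΦ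
  obtain ⟨hqc, hqd, hqu, hnc, hnd, hnu, hrel', hcol', hdet'⟩ := hΨ
  set cp : ℂ → Matrix (Fin N) (Fin N) ℂ := fun z => (Φp z)⁻¹ * Ψp z with hcpdef
  set cm : ℂ → Matrix (Fin N) (Fin N) ℂ := fun z => (Φm z)⁻¹ * Ψm z with hcmdef
  -- sphere identity
  have hsphere : ∀ ζ : ℂ, ‖ζ‖ = 1 → cp ζ = cm ζ := by
    intro ζ hζ
    have hζc : ζ ∈ closedBall (0:ℂ) 1 := by rw [mem_closedBall_zero_iff, hζ]
    have h1 : (1:ℝ) ≤ ‖ζ‖ := le_of_eq hζ.symm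
    have hup := hpu ζ hζc
    have hum := hmu ζ h1
    have hdp : IsUnit (Φp ζ).det := (Matrix.isUnit_iff_isUnit_det _).1 hup
    have hdm : IsUnit (Φm ζ).det := (Matrix.isUnit_iff_isUnit_det _).1 hum
    have hA : A ζ = Φp ζ * (Φm ζ)⁻¹ := by
      rw [hrel ζ hζ, Matrix.mul_assoc, Matrix.mul_nonsing_inv _ hdm, Matrix.mul_one]
    show (Φp ζ)⁻¹ * Ψp ζ = (Φm ζ)⁻¹ * Ψm ζ
    rw [hrel' ζ hζ, hA, Matrix.mul_assoc (Φp ζ), ← Matrix.mul_assoc ((Φp ζ)⁻¹),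
      Matrix.nonsing_inv_mul _ hdp, Matrix.one_mul]
  -- regularity of entries
  have hcp_c : ∀ i j, ContinuousOn (fun z => cp z i j) (closedBall 0 1) :=
    fun i j => contOn_inv_mul_entry hpc hqc hpu i j
  have hcp_d : ∀ i j, DifferentiableOn ℂ (fun z => cp z i j) (ball 0 1) :=
    fun i j => diffOn_inv_mul_entry hpd hqd
      (fun z hz => hpu z (ball_subset_closedBall hz)) i j
  have hcm_c : ∀ i j, ContinuousOn (fun z => cm z i j) {z : ℂ | 1 ≤ ‖z‖} :=
    fun i j => contOn_inv_mul_entry hmc hnc (fun z hz => hmu z hz) i j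
  have hcm_d : ∀ i j, DifferentiableOn ℂ (fun z => cm z i j) {z : ℂ | 1 < ‖z‖} :=
    fun i j => diffOn_inv_mul_entry hmd hnd (fun z hz => hmu z (le_of_lt hz)) i j
  -- bounds at infinity
  obtain ⟨δ, R0, hδ, hR0, hlow⟩ := order_lower hdet
  choose Mc Rc hRc hMc using fun c => order_upper (hcol c)
  choose Mc' Rc' hRc' hMc' using fun c => order_upper (hcol' c)
  set Rtot : ℝ := R0 + ((∑ c, Rc c) + (∑ c, Rc' c)) with hRtotdef
  have hsum1 : (0:ℝ) ≤ ∑ c, Rc c := Finset.sum_nonneg fun c _ => le_trans zero_le_one (hRc c)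
  have hsum2 : (0:ℝ) ≤ ∑ c, Rc' c := Finset.sum_nonneg fun c _ => le_trans zero_le_one (hRc' c)
  have hRtot1 : (1:ℝ) ≤ Rtot := by
    rw [hRtotdef]; linarith [hR0]
  have hRtot_R0 : R0 ≤ Rtot := by rw [hRtotdef]; linarith
  have hRtot_Rc : ∀ c, Rc c ≤ Rtot := by
    intro c
    have h1 : Rc c ≤ ∑ c', Rc c' :=
      Finset.single_le_sum (fun c' _ => le_trans zero_le_one (hRc c')) (Finset.mem_univ c)
    rw [hRtotdef]; linarith [hR0]
  have hRtot_Rc' : ∀ c, Rc' c ≤ Rtot := by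
    intro c
    have h1 : Rc' c ≤ ∑ c', Rc' c' :=
      Finset.single_le_sum (fun c' _ => le_trans zero_le_one (hRc' c')) (Finset.mem_univ c)
    rw [hRtotdef]; linarith [hR0]
  -- the decay bound for entries in the zero block
  have hbound : ∀ i j : Fin N, k i - l j ≤ -1 → ∀ z : ℂ, Rtot ≤ ‖z‖ →
      ‖cm z i j‖ ≤ (δ⁻¹ * (Nat.factorial N : ℝ) *
        (max (Mc' j) 0 * ∏ c ∈ Finset.univ.erase i, max (Mc c) 0)) * ‖z‖⁻¹ := by
    intro i j hkl z hz
    have hz1 : (1:ℝ) ≤ ‖z‖ := le_trans hRtot1 hz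
    have hz0 : (0:ℝ) < ‖z‖ := lt_of_lt_of_le one_pos hz1
    have hzne : ‖z‖ ≠ 0 := ne_of_gt hz0
    set B : Matrix (Fin N) (Fin N) ℂ := (Φm z).updateCol i (fun s => Ψm z s j) with hBdef
    set mcoef : Fin N → ℝ := fun c => if c = i then max (Mc' j) 0 else max (Mc c) 0 with hmcoef
    set e : Fin N → ℤ := fun c => if c = i then -l j else -k c with hedef
    have hmcoef0 : ∀ c, 0 ≤ mcoef c := by
      intro c; rw [hmcoef]; dsimp only; split <;> exact le_max_right _ _
    have hBb : ∀ a c, ‖B a c‖ ≤ mcoef c * ‖z‖ ^ e c := by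
      intro a c
      by_cases hc : c = i
      · have h1 : B a c = Ψm z a j := by
          rw [hBdef, hc, Matrix.updateCol_apply, if_pos rfl]
        rw [h1, hmcoef, hedef]
        simp only [hc, if_pos rfl]
        calc ‖Ψm z a j‖ ≤ ‖(fun s => Ψm z s j)‖ := norm_le_pi_norm (fun s => Ψm z s j) a
          _ ≤ Mc' j * ‖z‖ ^ (-l j) := hMc' j z (le_trans (hRtot_Rc' j) hz)
          _ ≤ max (Mc' j) 0 * ‖z‖ ^ (-l j) :=
              mul_le_mul_of_nonneg_right (le_max_left _ _) (zpow_nonneg (norm_nonneg z) _)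
      · have h1 : B a c = Φm z a c := by
          rw [hBdef, Matrix.updateCol_apply, if_neg hc]
        rw [h1, hmcoef, hedef]
        simp only [hc, if_false]
        calc ‖Φm z a c‖ ≤ ‖(fun s => Φm z s c)‖ := norm_le_pi_norm (fun s => Φm z s c) a
          _ ≤ Mc c * ‖z‖ ^ (-k c) := hMc c z (le_trans (hRtot_Rc c) hz)
          _ ≤ max (Mc c) 0 * ‖z‖ ^ (-k c) :=
              mul_le_mul_of_nonneg_right (le_max_left _ _) (zpow_nonneg (norm_nonneg z) _)
    have hdetB : ‖B.det‖ ≤ (Nat.factorial N : ℝ) * ∏ c, (mcoef c * ‖z‖ ^ e c) :=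
      norm_det_le B _ (fun c => mul_nonneg (hmcoef0 c) (zpow_nonneg (norm_nonneg z) _)) hBb
    have hprod : ∏ c, (mcoef c * ‖z‖ ^ e c)
        = (max (Mc' j) 0 * ∏ c ∈ Finset.univ.erase i, max (Mc c) 0)
          * ‖z‖ ^ (k i - l j - ∑ c, k c) := by
      rw [Finset.prod_mul_distrib, prod_zpow_eq hzne]
      congr 1
      · rw [← Finset.mul_prod_erase Finset.univ mcoef (Finset.mem_univ i)]
        congr 1
        · rw [hmcoef]; simp
        · apply Finset.prod_congr rfl
          intro c hc
          rw [hmcoef]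
          simp only [if_neg (Finset.ne_of_mem_erase hc)]
      · congr 1
        have h1 : ∑ c ∈ Finset.univ.erase i, e c + e i = ∑ c, e c :=
          Finset.sum_erase_add _ _ (Finset.mem_univ i)
        have h2 : ∑ c ∈ Finset.univ.erase i, e c = ∑ c ∈ Finset.univ.erase i, (-k c) :=
          Finset.sum_congr rfl (fun c hc => by
            rw [hedef]; simp only [if_neg (Finset.ne_of_mem_erase hc)])
        have h3 : ∑ c ∈ Finset.univ.erase i, (-k c) + (-k i) = ∑ c, (-k c) :=
          Finset.sum_erase_add _ _ (Finset.mem_univ i)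
        have h4 : ∑ c, (-k c) = -∑ c, k c := by
          rw [← Finset.sum_neg_distrib]
        have h5 : e i = -l j := by rw [hedef]; simp
        linarith [h1, h2, h3, h4, h5]
    have hlow' : δ * ‖z‖ ^ (-(∑ c, k c)) ≤ ‖(Φm z).det‖ := hlow z (le_trans hRtot_R0 hz)
    have hdetpos : (0:ℝ) < ‖(Φm z).det‖ :=
      lt_of_lt_of_le (by positivity) hlow'
    have hcmeq : cm z i j = ((Φm z).det)⁻¹ * B.det := by
      rw [hBdef]
      exact inv_mul_entry_cramer (Φm z) (Ψm z) (hmu z hz1) i j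
    rw [hcmeq, norm_mul, norm_inv]
    have h6 : ‖(Φm z).det‖⁻¹ ≤ (δ * ‖z‖ ^ (-(∑ c, k c)))⁻¹ :=
      inv_anti₀ (by positivity) hlow'
    have h7 : ‖B.det‖ ≤ (Nat.factorial N : ℝ) *
        ((max (Mc' j) 0 * ∏ c ∈ Finset.univ.erase i, max (Mc c) 0)
          * ‖z‖ ^ (k i - l j - ∑ c, k c)) := by
      rw [← hprod]; exact hdetB
    set CM : ℝ := max (Mc' j) 0 * ∏ c ∈ Finset.univ.erase i, max (Mc c) 0 with hCM
    have hCM0 : (0:ℝ) ≤ CM := by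
      rw [hCM]
      exact mul_nonneg (le_max_right _ _) (Finset.prod_nonneg fun c _ => le_max_right _ _)
    calc ‖(Φm z).det‖⁻¹ * ‖B.det‖
        ≤ (δ * ‖z‖ ^ (-(∑ c, k c)))⁻¹ *
          ((Nat.factorial N : ℝ) * (CM * ‖z‖ ^ (k i - l j - ∑ c, k c))) :=
          mul_le_mul h6 h7 (norm_nonneg _) (by positivity)
      _ = (δ⁻¹ * (Nat.factorial N : ℝ) * CM) *
          (‖z‖ ^ (∑ c, k c) * ‖z‖ ^ (k i - l j - ∑ c, k c)) := by
          rw [mul_inv, ← zpow_neg, neg_neg]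
          ring
      _ = (δ⁻¹ * (Nat.factorial N : ℝ) * CM) * ‖z‖ ^ (k i - l j) := by
          rw [← zpow_add₀ hzne]
          congr 1
          ring
      _ ≤ (δ⁻¹ * (Nat.factorial N : ℝ) * CM) * ‖z‖⁻¹ := by
          apply mul_le_mul_of_nonneg_left _ (by positivity)
          calc ‖z‖ ^ (k i - l j) ≤ ‖z‖ ^ (-1 : ℤ) := zpow_le_zpow_right₀ hz1 hkl
            _ = ‖z‖⁻¹ := zpow_neg_one _
  -- vanishing of the zero block
  have hzero : ∀ i j : Fin N, r ≤ i → j ≤ r → ∀ z : ℂ, 1 ≤ ‖z‖ → cm z i j = 0 := by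
    intro i j hi hj
    have hkl : k i - l j ≤ -1 := by
      have h1 : k i ≤ k r := hk hi
      have h2 : l r ≤ l j := hl hj
      omega
    set f : ℂ → ℂ := fun z => if ‖z‖ ≤ 1 then cp z i j else cm z i j with hfdef
    have hglue : Differentiable ℂ f :=
      glue_entire (hcp_c i j) (hcp_d i j) (hcm_c i j) (hcm_d i j)
        (fun z hz => by rw [hsphere z hz])
    have hfm : ∀ z : ℂ, 1 ≤ ‖z‖ → f z = cm z i j := by
      intro z hz
      rw [hfdef]
      by_cases h : ‖z‖ ≤ 1
      · have : ‖z‖ = 1 := le_antisymm h hz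
        simp only [if_pos h]
        rw [hsphere z this]
      · simp only [if_neg h]
    have hdec : ∀ z : ℂ, Rtot ≤ ‖z‖ → ‖f z‖ ≤ (δ⁻¹ * (Nat.factorial N : ℝ) *
        (max (Mc' j) 0 * ∏ c ∈ Finset.univ.erase i, max (Mc c) 0)) * ‖z‖⁻¹ := by
      intro z hz
      rw [hfm z (le_trans hRtot1 hz)]
      exact hbound i j hkl z hz
    have hzero' := decay_zero hglue hdec
    intro z hz
    rw [← hfm z hz]
    exact hzero' z
  -- contradiction at z = 2
  have h2norm : ‖(2:ℂ)‖ = 2 := by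
    rw [show ((2:ℂ)) = ((2:ℝ) : ℂ) by norm_num, Complex.norm_real, Real.norm_eq_abs]
    norm_num
  have h21 : (1:ℝ) ≤ ‖(2:ℂ)‖ := by rw [h2norm]; norm_num
  have hdet0 : (cm 2).det = 0 :=
    det_eq_zero_of_block _ r (fun i j hi hj => hzero i j hi hj 2 h21)
  have hum := hmu 2 h21
  have hun := hnu 2 h21
  have hdm : (Φm 2).det ≠ 0 := ((Matrix.isUnit_iff_isUnit_det _).1 hum).ne_zero
  have hdn : (Ψm 2).det ≠ 0 := ((Matrix.isUnit_iff_isUnit_det _).1 hun).ne_zero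
  have hdetcm : (cm 2).det = ((Φm 2).det)⁻¹ * (Ψm 2).det := by
    show ((Φm 2)⁻¹ * Ψm 2).det = _
    rw [Matrix.det_mul, Matrix.det_nonsing_inv, Ring.inverse_eq_inv]
  rw [hdetcm] at hdet0
  exact (mul_ne_zero (inv_ne_zero hdm) hdn) hdet0

end PIhelp

/-- Uniqueness of partial indices: two canonical systems for the same continuous
invertible symbol `A` on the unit circle have the same (decreasingly ordered)
partial indices. -/
theorem partial_indices_independent_of_canonical_system (N : ℕ)
    (A : ℂ → Matrix (Fin N) (Fin N) ℂ)
    (hA : ∀ i j, ContinuousOn (fun ζ => A ζ i j) (sphere 0 1))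
    (hAinv : ∀ ζ ∈ sphere (0 : ℂ) 1, IsUnit (A ζ))
    (Φp Φm Ψp Ψm : ℂ → Matrix (Fin N) (Fin N) ℂ)
    (k l : Fin N → ℤ)
    (hΦ : CanonicalSystem N A Φp Φm k)
    (hΨ : CanonicalSystem N A Ψp Ψm l)
    (hk : Antitone k) (hl : Antitone l) :
    k = l := by
  by_contra hne
  have : ∃ r : Fin N, k r ≠ l r := by
    by_contra h
    push_neg at h
    exact hne (funext h)
  obtain ⟨r, hr⟩ := this
  rcases (Ne.lt_or_gt hr) with h | h
  · exact (PIhelp.key A Φp Φm Ψp Ψm k l hΦ hΨ hk hl r h).elim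
  · exact (PIhelp.key A Ψp Ψm Φp Φm l k hΨ hΦ hl hk r h).elim
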